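/- For vectors E, B, ω in R^3 with |ω| = 1, the identity (1/2)(|E|² + |B|²) + ω·(E×B) = (1/4)(|E·ω|² + |B·ω|² + |E − ω×B|² + |B + ω×E|²) holds. In particular the left-hand side is nonnegative. -/

import Mathlib

open RealInnerProductSpace

noncomputable def cross3 (a b : EuclideanSpace ℝ (Fin 3)) : EuclideanSpace ℝ (Fin 3) :=
  WithLp.toLp 2 ![a 1 * b 2 - a 2 * b 1, a 2 * b 0 - a 0 * b 2, a 0 * b 1 - a 1 * b 0]

lemma norm_sq3 (v : EuclideanSpace ℝ (Fin 3)) : ‖v‖ ^ 2 = v 0 ^ 2 + v 1 ^ 2 + v 2 ^ 2 := by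
  rw [← real_inner_self_eq_norm_sq]
  simp only [PiLp.inner_apply, RCLike.inner_apply, Fin.sum_univ_three, conj_trivial]
  ring

lemma inner3 (x y : EuclideanSpace ℝ (Fin 3)) : ⟪x, y⟫ = x 0 * y 0 + x 1 * y 1 + x 2 * y 2 := by
  simp [PiLp.inner_apply, RCLike.inner_apply, Fin.sum_univ_three]
  ring
theorem stmt6 (E B ω : EuclideanSpace ℝ (Fin 3)) (hω : ‖ω‖ = 1) :
    (1 / 2) * (‖E‖ ^ 2 + ‖B‖ ^ 2) + ⟪ω, cross3 E B⟫ =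
      (1 / 4) * (⟪E, ω⟫ ^ 2 + ⟪B, ω⟫ ^ 2 + ‖E - cross3 ω B‖ ^ 2 + ‖B + cross3 ω E‖ ^ 2) ∧
    0 ≤ (1 / 2) * (‖E‖ ^ 2 + ‖B‖ ^ 2) + ⟪ω, cross3 E B⟫ := by
  have hω2 : ω 0 ^ 2 + ω 1 ^ 2 + ω 2 ^ 2 = 1 := by
    have := norm_sq3 ω
    rw [hω] at this; linarith
  have key : (1 / 2) * (‖E‖ ^ 2 + ‖B‖ ^ 2) + ⟪ω, cross3 E B⟫ =
      (1 / 4) * (⟪E, ω⟫ ^ 2 + ⟪B, ω⟫ ^ 2 + ‖E - cross3 ω B‖ ^ 2 + ‖B + cross3 ω E‖ ^ 2) := by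
    simp only [norm_sq3, inner3, cross3, PiLp.toLp_apply, PiLp.sub_apply, PiLp.add_apply,
      Matrix.cons_val_zero, Matrix.cons_val_one, Matrix.head_cons, Matrix.cons_val_two,
      Matrix.tail_cons]
    nlinarith [hω2, sq_nonneg (E 0), sq_nonneg (B 0)]
  refine ⟨key, ?_⟩
  rw [key]
  positivity
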